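/- Let g(z) = c · ∏_{j=1}^n (z - z_j) be a polynomial of degree n with all z_j ≠ 0, such that sup_{|z|=1} |g(z)| ≥ 1. Let h(z) = ∏_{j=1}^n (z - ζ_j) where ζ_j = z_j/|z_j|. Then for every z with |z| = 1, |h(z)| ≤ 2^n |g(z)|. -/

import Mathlib

open Complex Finset

open ComplexConjugate in

lemma key_aux (w ζ : ℂ) (r : ℝ) (hw : ‖w‖ = 1) (hζ : ‖ζ‖ = 1)
    (hr : 0 < r) :
    ‖w - ζ‖ * (1 + r) ≤ 2 * ‖w - (r : ℂ) * ζ‖ := by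
  have htle : |(w * conj ζ).re| ≤ 1 := by
    calc |(w * conj ζ).re| ≤ ‖w * conj ζ‖ := Complex.abs_re_le_norm _
    _ = 1 := by rw [norm_mul, Complex.norm_conj, hw, hζ, one_mul]
  set t : ℝ := (w * conj ζ).re with ht
  have hw1 : Complex.normSq w = 1 := by rw [Complex.normSq_eq_norm_sq, hw]; norm_num
  have hζ1 : Complex.normSq ζ = 1 := by rw [Complex.normSq_eq_norm_sq, hζ]; norm_num
  have h1 : Complex.normSq (w - ζ) = 2 - 2 * t := by
    rw [Complex.normSq_sub, hw1, hζ1, ← ht]; ring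
  have h2 : Complex.normSq (w - (r : ℂ) * ζ) = 1 + r ^ 2 - 2 * r * t := by
    rw [Complex.normSq_sub, hw1]
    have hz1 : Complex.normSq ((r : ℂ) * ζ) = r ^ 2 := by
      rw [Complex.normSq_mul, hζ1, Complex.normSq_ofReal]; ring
    have h3 : (w * conj ((r : ℂ) * ζ)).re = r * t := by
      rw [map_mul, Complex.conj_ofReal, ht,
        show w * ((r:ℂ) * conj ζ) = (r:ℂ) * (w * conj ζ) by ring]
      simp [Complex.re_ofReal_mul]
    rw [hz1, h3]; ring
  have ht1 : -1 ≤ t := by linarith [abs_le.mp htle |>.1]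
  have hsq : Complex.normSq (w - ζ) * (1 + r) ^ 2 ≤ 4 * Complex.normSq (w - (r:ℂ) * ζ) := by
    rw [h1, h2]; nlinarith [sq_nonneg (1 - r), sq_nonneg ((1 - r) * (1 + t))]
  have habs1 : ‖w - ζ‖ ^ 2 = Complex.normSq (w - ζ) := Complex.sq_norm _
  have habs2 : ‖w - (r:ℂ) * ζ‖ ^ 2 = Complex.normSq (w - (r:ℂ)*ζ) :=
    Complex.sq_norm _
  nlinarith [norm_nonneg (w - ζ), norm_nonneg (w - (r:ℂ)*ζ), hr]

lemma key_ineq (w zj : ℂ) (hw : ‖w‖ = 1) (hzj : zj ≠ 0) :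
    ‖w - zj / (‖zj‖ : ℂ)‖ * (1 + ‖zj‖)
      ≤ 2 * ‖w - zj‖ := by
  have hr0 : 0 < ‖zj‖ := norm_pos_iff.mpr hzj
  have hrne : (‖zj‖ : ℂ) ≠ 0 := by exact_mod_cast hr0.ne'
  have hζ : ‖zj / (‖zj‖ : ℂ)‖ = 1 := by
    rw [norm_div, Complex.norm_real, norm_norm, div_self hr0.ne']
  have := key_aux w (zj / (‖zj‖ : ℂ)) (‖zj‖) hw hζ hr0
  rwa [mul_div_cancel₀ _ hrne] at this

/-- Radial projection of zeros to the unit circle: if `g(z) = c·∏(z - zⱼ)` with all `zⱼ ≠ 0`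
and `sup_{|z|=1} |g| ≥ 1`, and `h(z) = ∏(z - zⱼ/|zⱼ|)`, then `|h(z)| ≤ 2ⁿ|g(z)|` on `|z|=1`. -/
theorem stmt_1 (n : ℕ) (c : ℂ) (hc : c ≠ 0) (z : Fin n → ℂ) (hz : ∀ j, z j ≠ 0)
    (g h : ℂ → ℂ)
    (hg : ∀ w, g w = c * ∏ j, (w - z j))
    (hh : ∀ w, h w = ∏ j, (w - z j / (‖z j‖ : ℂ)))
    (hsup : ∃ w, ‖w‖ = 1 ∧ 1 ≤ ‖g w‖) :
    ∀ w, ‖w‖ = 1 → ‖h w‖ ≤ 2 ^ n * ‖g w‖ := by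
  intro w hw
  obtain ⟨w0, hw0, hgw0⟩ := hsup
  set P : ℝ := ∏ j, (1 + ‖z j‖) with hP
  have hPpos : 0 < P := Finset.prod_pos fun j _ => by positivity
  -- 1 ≤ |c| * P
  have hcP : 1 ≤ ‖c‖ * P := by
    have : ‖g w0‖ ≤ ‖c‖ * P := by
      rw [hg, norm_mul, norm_prod]
      apply mul_le_mul_of_nonneg_left _ (norm_nonneg c)
      apply Finset.prod_le_prod (fun j _ => norm_nonneg _)
      intro j _
      calc ‖w0 - z j‖ ≤ ‖w0‖ + ‖z j‖ :=
            norm_sub_le _ _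
        _ = 1 + ‖z j‖ := by rw [hw0]
    linarith
  -- pointwise product bound
  have hprod : (∏ j, ‖w - z j / (‖z j‖ : ℂ)‖) * P
      ≤ 2 ^ n * ∏ j, ‖w - z j‖ := by
    rw [hP, ← Finset.prod_mul_distrib]
    calc (∏ j, ‖w - z j / (‖z j‖ : ℂ)‖ * (1 + ‖z j‖))
        ≤ ∏ j, 2 * ‖w - z j‖ := by
          apply Finset.prod_le_prod
          · intro j _; positivity
          · intro j _; exact key_ineq w (z j) hw (hz j)
      _ = 2 ^ n * ∏ j, ‖w - z j‖ := by
          rw [Finset.prod_mul_distrib, Finset.prod_const, Finset.card_univ, Fintype.card_fin]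
  have hhabs : ‖h w‖ = ∏ j, ‖w - z j / (‖z j‖ : ℂ)‖ := by
    rw [hh, norm_prod]
  have hgabs : ‖g w‖ = ‖c‖ * ∏ j, ‖w - z j‖ := by
    rw [hg, norm_mul, norm_prod]
  have hhnn : 0 ≤ ‖h w‖ := norm_nonneg _
  calc ‖h w‖ = ‖h w‖ * 1 := (mul_one _).symm
    _ ≤ ‖h w‖ * (‖c‖ * P) := by gcongr
    _ = (‖h w‖ * P) * ‖c‖ := by ring
    _ ≤ (2 ^ n * ∏ j, ‖w - z j‖) * ‖c‖ := by
        apply mul_le_mul_of_nonneg_right _ (norm_nonneg c)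
        rw [hhabs]; exact hprod
    _ = 2 ^ n * ‖g w‖ := by rw [hgabs]; ring
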